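/- Every string a in S (the union S_1 ∪ S_2 of the ten families S_{1a},...,S_{1e}, S_{2a},...,S_{2e}) satisfies -4 ≤ I(a) ≤ 0, where I(a) = Σ_i (a_i - 3). Moreover, a ∈ S with I(a) = 0 if and only if a ∈ S_{2a} ∪ S_{2b} ∪ S_{2c}. -/

import Mathlib

/-- Numerator and denominator of the Hirzebruch–Jung continued fraction
`[a_1,...,a_n] = a_1 - 1/(a_2 - 1/(⋯ - 1/a_n))`; the empty fraction is `1/0`. -/
def hj : List ℕ → ℤ × ℤ
  | [] => (1, 0)
  | a :: l => ((a : ℤ) * (hj l).1 - (hj l).2, (hj l).1)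

def hjNum (l : List ℕ) : ℤ := (hj l).1

def hjDen (l : List ℕ) : ℤ := (hj l).2

/-- Linear-dual strings: entries `≥ 2` and `[c] = p/(p-q)` where `[b] = p/q`. -/
def IsLinearDual (b c : List ℕ) : Prop :=
  (∀ x ∈ b, 2 ≤ x) ∧ (∀ x ∈ c, 2 ≤ x) ∧
    hjNum c = hjNum b ∧ hjDen b + hjDen c = hjNum b

/-- Equivalence of strings up to cyclic reordering and reversal. -/
def cycEquiv (a b : List ℕ) : Prop :=
  ∃ m, a.rotate m = b ∨ (a.rotate m).reverse = b

/-- `I(a) = Σ_i (a_i - 3)`. -/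
def Ival (a : List ℕ) : ℤ := (a.map fun x => (x : ℤ) - 3).sum

/-- Add `1` to the first entry. -/
def bumpHead (l : List ℕ) : List ℕ := l.modifyHead (· + 1)

/-- Add `1` to the last entry. -/
def bumpLast (l : List ℕ) : List ℕ := (l.reverse.modifyHead (· + 1)).reverse

/-- `S_{1a} = {(b_1,...,b_k, 2, c_l,...,c_1, 2) | k + l ≥ 3}`. -/
def InS1a (a : List ℕ) : Prop :=
  ∃ b c, IsLinearDual b c ∧ 3 ≤ b.length + c.length ∧
    cycEquiv a (b ++ [2] ++ c.reverse ++ [2])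

/-- `S_{1b} = {(b_1,...,b_k, 2, c_l,...,c_1, 5) | k + l ≥ 2}`. -/
def InS1b (a : List ℕ) : Prop :=
  ∃ b c, IsLinearDual b c ∧ 2 ≤ b.length + c.length ∧
    cycEquiv a (b ++ [2] ++ c.reverse ++ [5])

/-- `S_{1c} = {(b_1,...,b_k, 3, c_l,...,c_1, 3) | k + l ≥ 2}`. -/
def InS1c (a : List ℕ) : Prop :=
  ∃ b c, IsLinearDual b c ∧ 2 ≤ b.length + c.length ∧
    cycEquiv a (b ++ [3] ++ c.reverse ++ [3])

/-- `S_{1d} = {(2, b_1+1, b_2,...,b_{k-1}, b_k+1, 2, 2, c_l+1, c_{l-1},...,c_2, c_1+1, 2)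
| k + l ≥ 3}`. -/
def InS1d (a : List ℕ) : Prop :=
  ∃ b c, IsLinearDual b c ∧ 3 ≤ b.length + c.length ∧
    cycEquiv a ([2] ++ bumpHead (bumpLast b) ++ [2, 2] ++
      bumpHead (bumpLast c.reverse) ++ [2])

/-- `S_{1e} = {(2, 3+x, 2, 3, 3, 2^{[x-1]}, 3, 3) | x ≥ 0}`, where
`(3, 2^{[-1]}, 3) := (4)`. -/
def InS1e (a : List ℕ) : Prop :=
  ∃ x : ℕ, cycEquiv a
    (if x = 0 then [2, 3, 2, 3, 4, 3]
     else [2, 3 + x, 2, 3, 3] ++ List.replicate (x - 1) 2 ++ [3, 3])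

/-- `S_{2a} = {(b_1+3, b_2,...,b_k, 2, c_l,...,c_1)}`. -/
def InS2a (a : List ℕ) : Prop :=
  ∃ b c, IsLinearDual b c ∧ cycEquiv a (b.modifyHead (· + 3) ++ [2] ++ c.reverse)

/-- `S_{2b} = {(3+x, b_1,...,b_{k-1}, b_k+1, 2^{[x]}, c_l+1, c_{l-1},...,c_1)
| x ≥ 0, k + l ≥ 2}`. -/
def InS2b (a : List ℕ) : Prop :=
  ∃ b c, ∃ x : ℕ, IsLinearDual b c ∧ 2 ≤ b.length + c.length ∧
    cycEquiv a ((3 + x) :: (bumpLast b ++ List.replicate x 2 ++ bumpHead c.reverse))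

/-- The string `(3+x_1, 2^{[x_2]}, 3+x_3, ..., 3+x_{2k+1}, 2^{[x_1]}, 3+x_2, 2^{[x_3]},
..., 3+x_{2k}, 2^{[x_{2k+1}]})`, with parameters indexed cyclically by `ZMod (2k+1)`:
the `j`-th block is `(3 + x_{1+2j}, 2^{[x_{2+2j}]})`. -/
def s2cStr (k : ℕ) (x : ZMod (2 * k + 1) → ℕ) : List ℕ :=
  (List.range (2 * k + 1)).flatMap fun j =>
    (3 + x (1 + 2 * (j : ZMod (2 * k + 1)))) ::
      List.replicate (x (2 + 2 * (j : ZMod (2 * k + 1)))) 2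

/-- Membership in `S_{2c}`, up to cyclic reordering and reversal. -/
def InS2c (a : List ℕ) : Prop := ∃ k x, cycEquiv a (s2cStr k x)

/-- `S_{2d} = {(2, 2+x, 2, 3, 2^{[x-1]}, 3, 4) | x ≥ 0}`, where
`(3, 2^{[-1]}, 3) := (4)`. -/
def InS2d (a : List ℕ) : Prop :=
  ∃ x : ℕ, cycEquiv a
    (if x = 0 then [2, 2, 2, 4, 4]
     else [2, 2 + x, 2, 3] ++ List.replicate (x - 1) 2 ++ [3, 4])

/-- `S_{2e} = {(2, b_1+1, b_2,...,b_k, 2, c_l,...,c_2, c_1+1, 2) | k + l ≥ 3}`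
together with `(2,2,2,3)`. -/
def InS2e (a : List ℕ) : Prop :=
  (∃ b c, IsLinearDual b c ∧ 3 ≤ b.length + c.length ∧
    cycEquiv a ([2] ++ bumpHead b ++ [2] ++ bumpLast c.reverse ++ [2])) ∨
  cycEquiv a [2, 2, 2, 3]

def InS1 (a : List ℕ) : Prop := InS1a a ∨ InS1b a ∨ InS1c a ∨ InS1d a ∨ InS1e a

def InS2 (a : List ℕ) : Prop := InS2a a ∨ InS2b a ∨ InS2c a ∨ InS2d a ∨ InS2e a

def InS (a : List ℕ) : Prop := InS1 a ∨ InS2 a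

@[simp] lemma Ival_nil : Ival [] = 0 := rfl
@[simp] lemma Ival_cons (a : ℕ) (l : List ℕ) : Ival (a :: l) = (a : ℤ) - 3 + Ival l := by
  simp [Ival]
@[simp] lemma Ival_append (l m : List ℕ) : Ival (l ++ m) = Ival l + Ival m := by
  simp [Ival]
@[simp] lemma Ival_reverse (l : List ℕ) : Ival l.reverse = Ival l := by
  induction l with
  | nil => simp
  | cons a t ih =>
    rw [List.reverse_cons, Ival_append, Ival_cons, ih]
    simp only [Ival_cons, Ival_nil]
    ring
@[simp] lemma Ival_replicate (n : ℕ) : Ival (List.replicate n 2) = -n := by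
  induction n with
  | zero => simp
  | succ n ih =>
    rw [List.replicate_succ, Ival_cons, ih]
    push_cast
    ring

lemma Ival_perm {l m : List ℕ} (h : l.Perm m) : Ival l = Ival m := by
  induction h with
  | nil => rfl
  | cons a _ ih => simp [ih]
  | swap a b l => simp; ring
  | trans _ _ ih1 ih2 => exact ih1.trans ih2

lemma Ival_cyc {a b : List ℕ} (h : cycEquiv a b) : Ival a = Ival b := by
  obtain ⟨m, h | h⟩ := h
  · rw [← h]
    exact (Ival_perm (List.rotate_perm a m)).symm
  · rw [← h, Ival_reverse]
    exact (Ival_perm (List.rotate_perm a m)).symm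

lemma Ival_bumpHead {l : List ℕ} (h : l ≠ []) : Ival (bumpHead l) = Ival l + 1 := by
  obtain ⟨a, t, rfl⟩ := List.exists_cons_of_ne_nil h
  simp only [bumpHead, List.modifyHead_cons, Ival_cons]
  push_cast
  ring

lemma Ival_modifyHead3 {l : List ℕ} (h : l ≠ []) : Ival (l.modifyHead (· + 3)) = Ival l + 3 := by
  obtain ⟨a, t, rfl⟩ := List.exists_cons_of_ne_nil h
  simp only [List.modifyHead_cons, Ival_cons]
  push_cast
  ring

lemma Ival_bumpLast {l : List ℕ} (h : l ≠ []) : Ival (bumpLast l) = Ival l + 1 := by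
  have hr : l.reverse ≠ [] := by simpa using h
  rw [bumpLast, Ival_reverse, show (l.reverse.modifyHead (· + 1)) = bumpHead l.reverse from rfl,
    Ival_bumpHead hr, Ival_reverse]

lemma bumpLast_ne_nil {l : List ℕ} (h : l ≠ []) : bumpLast l ≠ [] := by
  intro hc
  apply h
  have := congrArg List.length hc
  simp [bumpLast] at this
  exact this

lemma list_range_sum (n : ℕ) (f : ℕ → ℤ) :
    ((List.range n).map f).sum = ∑ j ∈ Finset.range n, f j := by
  induction n with
  | zero => simp
  | succ n ih =>
    rw [List.range_succ, List.map_append, List.sum_append, Finset.sum_range_succ, ih]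
    simp

lemma sum_range_zmod {n : ℕ} [NeZero n] (f : ZMod n → ℤ) :
    ∑ j ∈ Finset.range n, f (j : ZMod n) = ∑ t : ZMod n, f t := by
  apply Finset.sum_nbij' (fun j => ((j : ℕ) : ZMod n)) (fun t => t.val)
  · intro a _
    exact Finset.mem_univ _
  · intro a _
    exact Finset.mem_range.mpr (ZMod.val_lt a)
  · intro a ha
    exact ZMod.val_cast_of_lt (Finset.mem_range.mp ha)
  · intro a _
    exact ZMod.natCast_rightInverse a
  · intro a _
    rfl

lemma Ival_s2cStr (k : ℕ) (x : ZMod (2 * k + 1) → ℕ) : Ival (s2cStr k x) = 0 := by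
  haveI : NeZero (2 * k + 1) := ⟨by omega⟩
  have hflat : ∀ (l : List ℕ) (f : ℕ → List ℕ),
      Ival (l.flatMap f) = (l.map fun j => Ival (f j)).sum := by
    intro l f
    induction l with
    | nil => simp
    | cons a t ih => simp [List.flatMap_cons, ih]
  have hl : ∀ l : List ℕ, (do let a ← l; pure (a : ZMod (2 * k + 1)) : List (ZMod (2 * k + 1)))
      = l.map (fun a : ℕ => (a : ZMod (2 * k + 1))) := by
    intro l
    induction l with
    | nil => rfl
    | cons a t ih => simp_all
  rw [s2cStr, hl, List.flatMap_map, hflat, list_range_sum]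
  set c : ZMod (2 * k + 1) := ((k + 1 : ℕ) : ZMod (2 * k + 1)) with hcdef
  have hblock : ∀ j ∈ Finset.range (2 * k + 1),
      Ival ((3 + x (1 + 2 * (j : ZMod (2 * k + 1)))) ::
        List.replicate (x (2 + 2 * (j : ZMod (2 * k + 1)))) 2)
      = (x (1 + 2 * (j : ZMod (2 * k + 1))) : ℤ)
        - (x (1 + 2 * ((j : ZMod (2 * k + 1)) + c)) : ℤ) := by
    intro j _
    have hc : (2 : ZMod (2 * k + 1)) * c = 1 := by
      rw [hcdef]
      have h0 : ((2 * k + 1 : ℕ) : ZMod (2 * k + 1)) = 0 := ZMod.natCast_self _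
      push_cast at h0 ⊢
      linear_combination h0
    have harg : 1 + 2 * ((j : ZMod (2 * k + 1)) + c) = 2 + 2 * (j : ZMod (2 * k + 1)) := by
      linear_combination hc
    rw [Ival_cons, Ival_replicate, harg]
    push_cast
    ring
  have e1 := sum_range_zmod (n := 2 * k + 1) (fun t => (x (1 + 2 * t) : ℤ))
  have e2 := sum_range_zmod (n := 2 * k + 1) (fun t => (x (1 + 2 * (t + c)) : ℤ))
  have e3 : ∑ t : ZMod (2 * k + 1), (x (1 + 2 * (t + c)) : ℤ)
      = ∑ t : ZMod (2 * k + 1), (x (1 + 2 * t) : ℤ) :=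
    Fintype.sum_bijective (· + c) (Equiv.addRight c).bijective _ _ (fun t => rfl)
  beta_reduce at e1 e2
  rw [Finset.sum_congr rfl hblock, Finset.sum_sub_distrib, e1, e2, e3]
  ring

@[simp] lemma hjNum_nil : hjNum [] = 1 := rfl
@[simp] lemma hjDen_nil : hjDen [] = 0 := rfl
@[simp] lemma hjNum_cons (a : ℕ) (l : List ℕ) :
    hjNum (a :: l) = (a : ℤ) * hjNum l - hjDen l := rfl
@[simp] lemma hjDen_cons (a : ℕ) (l : List ℕ) : hjDen (a :: l) = hjNum l := rfl

lemma hj_pos : ∀ l : List ℕ, l ≠ [] → (∀ x ∈ l, 2 ≤ x) → 1 ≤ hjDen l ∧ hjDen l < hjNum l := by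
  intro l
  induction l with
  | nil => simp
  | cons a t ih =>
    intro _ hx
    have ha : (2:ℤ) ≤ (a:ℤ) := by exact_mod_cast hx a (by simp)
    rcases eq_or_ne t [] with rfl | ht
    · simp only [hjNum_cons, hjDen_cons, hjNum_nil, hjDen_nil, mul_one, sub_zero]
      constructor
      · norm_num
      · linarith
    · obtain ⟨h1, h2⟩ := ih ht (fun x hx' => hx x (by simp [hx']))
      simp only [hjNum_cons, hjDen_cons]
      constructor
      · linarith
      · nlinarith

lemma hjNum_ge_two {l : List ℕ} (h : l ≠ []) (hx : ∀ x ∈ l, 2 ≤ x) : 2 ≤ hjNum l := by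
  obtain ⟨h1, h2⟩ := hj_pos l h hx; linarith

lemma dual_symm {b c : List ℕ} (h : IsLinearDual b c) : IsLinearDual c b := by
  obtain ⟨h1, h2, h3, h4⟩ := h
  exact ⟨h2, h1, h3.symm, by rw [h3]; linarith⟩

lemma dual_ne_nil {b c : List ℕ} (h : IsLinearDual b c) : b ≠ [] ∧ c ≠ [] := by
  obtain ⟨h1, h2, h3, h4⟩ := h
  constructor
  · rintro rfl
    simp only [hjNum_nil, hjDen_nil, zero_add] at h3 h4
    rcases eq_or_ne c [] with rfl | hc
    · simp at h4
    · obtain ⟨hc1, hc2⟩ := hj_pos c hc h2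
      omega
  · rintro rfl
    simp only [hjNum_nil, hjDen_nil, add_zero] at h3 h4
    rcases eq_or_ne b [] with rfl | hb
    · simp at h4
    · have := hjNum_ge_two hb h1
      omega

lemma num_gt_two_den {l : List ℕ} {x : ℕ} {t : List ℕ} (hl : l = x :: t) (hx3 : 3 ≤ x)
    (hx : ∀ y ∈ l, 2 ≤ y) : 2 * hjDen l < hjNum l := by
  subst hl
  have hx3' : (3:ℤ) ≤ (x:ℤ) := by exact_mod_cast hx3
  rcases eq_or_ne t [] with rfl | ht
  · simp only [hjNum_cons, hjDen_cons, hjNum_nil, hjDen_nil, mul_one, sub_zero]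
    linarith
  · obtain ⟨h1, h2⟩ := hj_pos t ht (fun y hy => hx y (by simp [hy]))
    simp only [hjNum_cons, hjDen_cons]
    nlinarith

lemma dual_head {b c : List ℕ} (h : IsLinearDual b c) :
    (∃ t, b = 2 :: t) ∨ (∃ t, c = 2 :: t) := by
  obtain ⟨hbne, hcne⟩ := dual_ne_nil h
  obtain ⟨b1, b', rfl⟩ := List.exists_cons_of_ne_nil hbne
  obtain ⟨c1, c', rfl⟩ := List.exists_cons_of_ne_nil hcne
  obtain ⟨h1, h2, h3, h4⟩ := h
  by_contra hcon
  push_neg at hcon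
  obtain ⟨hc1, hc2⟩ := hcon
  have hb1 : 3 ≤ b1 := by
    have h2b := h1 b1 (by simp)
    rcases Nat.lt_or_ge b1 3 with hlt | hge
    · have hb12 : b1 = 2 := by omega
      exact absurd (by rw [hb12]) (hc1 b')
    · exact hge
  have hc1' : 3 ≤ c1 := by
    have h2c := h2 c1 (by simp)
    rcases Nat.lt_or_ge c1 3 with hlt | hge
    · have hc12 : c1 = 2 := by omega
      exact absurd (by rw [hc12]) (hc2 c')
    · exact hge
  have g1 := num_gt_two_den rfl hb1 h1
  have g2 := num_gt_two_den rfl hc1' h2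
  rw [h3] at g2
  linarith

lemma dual_base {c : List ℕ} (h : IsLinearDual [2] c) : c = [2] := by
  obtain ⟨-, hcne⟩ := dual_ne_nil h
  obtain ⟨c1, c', rfl⟩ := List.exists_cons_of_ne_nil hcne
  obtain ⟨h1, h2, h3, h4⟩ := h
  have hc2 : ∀ x ∈ c', 2 ≤ x := fun x hx => h2 x (by simp [hx])
  simp only [hjNum_cons, hjDen_cons, hjNum_nil, hjDen_nil, mul_one, sub_zero] at h3 h4
  push_cast at h3 h4
  rcases eq_or_ne c' [] with rfl | hc'
  · simp only [hjNum_nil, hjDen_nil, mul_one, sub_zero] at h3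
    have : c1 = 2 := by exact_mod_cast h3
    rw [this]
  · exfalso
    have := hjNum_ge_two hc' hc2
    omega

lemma dual_step {b' c' : List ℕ} {c1 : ℕ} (hd : IsLinearDual (2 :: b') (c1 :: c'))
    (hb' : b' ≠ []) : 3 ≤ c1 ∧ IsLinearDual b' ((c1 - 1) :: c') := by
  obtain ⟨h1, h2, h3, h4⟩ := hd
  have hb2 : ∀ x ∈ b', 2 ≤ x := fun x hx => h1 x (by simp [hx])
  have hc2 : ∀ x ∈ c', 2 ≤ x := fun x hx => h2 x (by simp [hx])
  obtain ⟨hbd1, hbd2⟩ := hj_pos b' hb' hb2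
  simp only [hjNum_cons, hjDen_cons] at h3 h4
  push_cast at h3 h4
  have hc13 : 3 ≤ c1 := by
    have hc12 : 2 ≤ c1 := h2 c1 (by simp)
    by_contra hcon
    have hc1e : c1 = 2 := by omega
    subst hc1e
    push_cast at h3
    rcases eq_or_ne c' [] with rfl | hc'
    · simp only [hjNum_nil, hjDen_nil, mul_one, sub_zero] at h3 h4
      linarith
    · obtain ⟨hcd1, hcd2⟩ := hj_pos c' hc' hc2
      linarith
  have hcast : ((c1 - 1 : ℕ) : ℤ) = (c1 : ℤ) - 1 := by
    have h1c : 1 ≤ c1 := by omega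
    push_cast [h1c]; ring
  refine ⟨hc13, hb2, ?_, ?_, ?_⟩
  · intro x hx
    rcases List.mem_cons.mp hx with rfl | hx'
    · omega
    · exact hc2 x hx'
  · simp only [hjNum_cons, hcast]
    linarith
  · simp only [hjDen_cons]
    linarith

lemma dual_Ival_aux : ∀ n : ℕ, ∀ b c : List ℕ, b.length + c.length ≤ n →
    IsLinearDual b c → Ival b + Ival c = -2 := by
  intro n
  induction n with
  | zero =>
    intro b c hlen hd
    obtain ⟨hb, -⟩ := dual_ne_nil hd
    cases b <;> simp_all
  | succ n ih =>
    intro b c hlen hd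
    rcases dual_head hd with ⟨t, rfl⟩ | ⟨t, rfl⟩
    · rcases eq_or_ne t [] with rfl | ht
      · have hc2 := dual_base hd
        subst hc2
        simp [Ival]
      · obtain ⟨-, hcne⟩ := dual_ne_nil hd
        obtain ⟨c1, c', rfl⟩ := List.exists_cons_of_ne_nil hcne
        obtain ⟨hc13, hd'⟩ := dual_step hd ht
        have hrec := ih t ((c1 - 1) :: c') (by simp at hlen ⊢; omega) hd'
        simp only [Ival_cons] at hrec ⊢
        have hcast : ((c1 - 1 : ℕ) : ℤ) = (c1 : ℤ) - 1 := by
          have h1c : 1 ≤ c1 := by omega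
          push_cast [h1c]; ring
        rw [hcast] at hrec
        push_cast
        linarith
    · rcases eq_or_ne t [] with rfl | ht
      · have hb2 := dual_base (dual_symm hd)
        subst hb2
        simp [Ival]
      · obtain ⟨hbne, -⟩ := dual_ne_nil hd
        obtain ⟨b1, b', rfl⟩ := List.exists_cons_of_ne_nil hbne
        obtain ⟨hb13, hd'⟩ := dual_step (dual_symm hd) ht
        have hrec := ih t ((b1 - 1) :: b') (by simp at hlen ⊢; omega) hd'
        simp only [Ival_cons] at hrec ⊢
        have hcast : ((b1 - 1 : ℕ) : ℤ) = (b1 : ℤ) - 1 := by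
          have h1c : 1 ≤ b1 := by omega
          push_cast [h1c]; ring
        rw [hcast] at hrec
        push_cast
        linarith

lemma dual_Ival {b c : List ℕ} (h : IsLinearDual b c) : Ival b + Ival c = -2 :=
  dual_Ival_aux (b.length + c.length) b c le_rfl h


lemma Ival_of_S1a {a : List ℕ} (h : InS1a a) : Ival a = -4 := by
  obtain ⟨b, c, hd, -, hcyc⟩ := h
  have hI := dual_Ival hd
  rw [Ival_cyc hcyc]
  simp only [Ival_append, Ival_reverse, Ival_cons, Ival_nil]
  push_cast
  linarith

lemma Ival_of_S1b {a : List ℕ} (h : InS1b a) : Ival a = -1 := by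
  obtain ⟨b, c, hd, -, hcyc⟩ := h
  have hI := dual_Ival hd
  rw [Ival_cyc hcyc]
  simp only [Ival_append, Ival_reverse, Ival_cons, Ival_nil]
  push_cast
  linarith

lemma Ival_of_S1c {a : List ℕ} (h : InS1c a) : Ival a = -2 := by
  obtain ⟨b, c, hd, -, hcyc⟩ := h
  have hI := dual_Ival hd
  rw [Ival_cyc hcyc]
  simp only [Ival_append, Ival_reverse, Ival_cons, Ival_nil]
  push_cast
  linarith

lemma Ival_of_S1d {a : List ℕ} (h : InS1d a) : Ival a = -2 := by
  obtain ⟨b, c, hd, -, hcyc⟩ := h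
  obtain ⟨hb, hc⟩ := dual_ne_nil hd
  have hI := dual_Ival hd
  have hcr : c.reverse ≠ [] := by simpa using hc
  rw [Ival_cyc hcyc]
  simp only [Ival_append, Ival_cons, Ival_nil]
  rw [Ival_bumpHead (bumpLast_ne_nil hb), Ival_bumpLast hb,
      Ival_bumpHead (bumpLast_ne_nil hcr), Ival_bumpLast hcr, Ival_reverse]
  push_cast
  linarith

lemma Ival_of_S1e {a : List ℕ} (h : InS1e a) : Ival a = -1 := by
  obtain ⟨x, hcyc⟩ := h
  rw [Ival_cyc hcyc]
  rcases eq_or_ne x 0 with rfl | hx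
  · simp only [if_pos rfl, Ival_cons, Ival_nil]
    norm_num
  · simp only [if_neg hx, Ival_append, Ival_cons, Ival_nil, Ival_replicate]
    have h1 : 1 ≤ x := Nat.one_le_iff_ne_zero.mpr hx
    push_cast [h1]
    ring

lemma Ival_of_S2a {a : List ℕ} (h : InS2a a) : Ival a = 0 := by
  obtain ⟨b, c, hd, hcyc⟩ := h
  obtain ⟨hb, hc⟩ := dual_ne_nil hd
  have hI := dual_Ival hd
  rw [Ival_cyc hcyc]
  simp only [Ival_append, Ival_reverse, Ival_cons, Ival_nil]
  rw [Ival_modifyHead3 hb]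
  push_cast
  linarith

lemma Ival_of_S2b {a : List ℕ} (h : InS2b a) : Ival a = 0 := by
  obtain ⟨b, c, x, hd, -, hcyc⟩ := h
  obtain ⟨hb, hc⟩ := dual_ne_nil hd
  have hI := dual_Ival hd
  have hcr : c.reverse ≠ [] := by simpa using hc
  rw [Ival_cyc hcyc]
  simp only [Ival_append, Ival_cons, Ival_nil, Ival_replicate]
  rw [Ival_bumpLast hb, Ival_bumpHead hcr, Ival_reverse]
  push_cast
  linarith

lemma Ival_of_S2c {a : List ℕ} (h : InS2c a) : Ival a = 0 := by
  obtain ⟨k, x, hcyc⟩ := h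
  rw [Ival_cyc hcyc, Ival_s2cStr]

lemma Ival_of_S2d {a : List ℕ} (h : InS2d a) : Ival a = -1 := by
  obtain ⟨x, hcyc⟩ := h
  rw [Ival_cyc hcyc]
  rcases eq_or_ne x 0 with rfl | hx
  · simp only [if_pos rfl, Ival_cons, Ival_nil]
    norm_num
  · simp only [if_neg hx, Ival_append, Ival_cons, Ival_nil, Ival_replicate]
    have h1 : 1 ≤ x := Nat.one_le_iff_ne_zero.mpr hx
    push_cast [h1]
    ring

lemma Ival_of_S2e {a : List ℕ} (h : InS2e a) : Ival a = -3 := by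
  rcases h with ⟨b, c, hd, -, hcyc⟩ | hcyc
  · obtain ⟨hb, hc⟩ := dual_ne_nil hd
    have hI := dual_Ival hd
    have hcr : c.reverse ≠ [] := by simpa using hc
    rw [Ival_cyc hcyc]
    simp only [Ival_append, Ival_cons, Ival_nil]
    rw [Ival_bumpHead hb, Ival_bumpLast hcr, Ival_reverse]
    push_cast
    linarith
  · rw [Ival_cyc hcyc]
    simp only [Ival_cons, Ival_nil]
    norm_num

/-- Every string `a ∈ S = S_1 ∪ S_2` satisfies `-4 ≤ I(a) ≤ 0`; moreover, for
`a ∈ S`, `I(a) = 0` if and only if `a ∈ S_{2a} ∪ S_{2b} ∪ S_{2c}`. -/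
theorem I_bounds_on_S :
    (∀ a : List ℕ, InS a → -4 ≤ Ival a ∧ Ival a ≤ 0) ∧
    (∀ a : List ℕ, InS a → (Ival a = 0 ↔ InS2a a ∨ InS2b a ∨ InS2c a)) := by
  constructor
  · rintro a ((h | h | h | h | h) | (h | h | h | h | h))
    · rw [Ival_of_S1a h]; norm_num
    · rw [Ival_of_S1b h]; norm_num
    · rw [Ival_of_S1c h]; norm_num
    · rw [Ival_of_S1d h]; norm_num
    · rw [Ival_of_S1e h]; norm_num
    · rw [Ival_of_S2a h]; norm_num
    · rw [Ival_of_S2b h]; norm_num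
    · rw [Ival_of_S2c h]; norm_num
    · rw [Ival_of_S2d h]; norm_num
    · rw [Ival_of_S2e h]; norm_num
  · intro a ha
    constructor
    · intro h0
      rcases ha with (h | h | h | h | h) | (h | h | h | h | h)
      · rw [Ival_of_S1a h] at h0; norm_num at h0
      · rw [Ival_of_S1b h] at h0; norm_num at h0
      · rw [Ival_of_S1c h] at h0; norm_num at h0
      · rw [Ival_of_S1d h] at h0; norm_num at h0
      · rw [Ival_of_S1e h] at h0; norm_num at h0
      · exact Or.inl h
      · exact Or.inr (Or.inl h)
      · exact Or.inr (Or.inr h)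
      · rw [Ival_of_S2d h] at h0; norm_num at h0
      · rw [Ival_of_S2e h] at h0; norm_num at h0
    · rintro (h | h | h)
      · exact Ival_of_S2a h
      · exact Ival_of_S2b h
      · exact Ival_of_S2c h
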